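/- If a connected graph G has a cut vertex (point of articulation), then the algebraic connectivity λ₂(G) satisfies λ₂(G) ≤ 1. -/

import Mathlib

open Matrix BigOperators

variable {V : Type*} [Fintype V] [DecidableEq V]

/-- A cut vertex (point of articulation): its removal disconnects the graph. -/
def IsCutVertex (G : SimpleGraph V) (v : V) : Prop :=
  ¬ (G.induce {w : V | w ≠ v}).Connected

/-- The algebraic connectivity: the second smallest Laplacian eigenvalue, characterized
as the minimum Rayleigh quotient over nonzero vectors orthogonal to the all-ones vector. -/
noncomputable def algConn (G : SimpleGraph V) [DecidableRel G.Adj] : ℝ :=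
  sInf {r : ℝ | ∃ x : V → ℝ, x ≠ 0 ∧ (∑ v, x v) = 0 ∧
    r = (x ⬝ᵥ (G.lapMatrix ℝ) *ᵥ x) / (x ⬝ᵥ x)}

theorem stmt1 (G : SimpleGraph V) [DecidableRel G.Adj] (hG : G.Connected)
    (hcard : 2 ≤ Fintype.card V) (v : V) (hv : IsCutVertex G v) :
    algConn G ≤ 1 := by
  classical
  obtain ⟨w0, hw0⟩ := Fintype.exists_ne_of_one_lt_card (by omega) v
  have hne : Nonempty {w : V | w ≠ v} := ⟨⟨w0, hw0⟩⟩
  have hpre : ¬ (G.induce {w : V | w ≠ v}).Preconnected := by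
    intro h
    exact hv ⟨h⟩
  rw [SimpleGraph.Preconnected] at hpre
  push_neg at hpre
  obtain ⟨u, w, huw⟩ := hpre
  set G' := G.induce {w : V | w ≠ v} with hG'
  set P : V → Prop := fun i => ∃ h : i ≠ v, G'.Reachable u ⟨i, h⟩ with hP
  set FA : Finset V := Finset.univ.filter P with hFAdef
  set FB : Finset V := Finset.univ.filter (fun i => i ≠ v ∧ ¬ P i) with hFBdef
  have hFA : ∀ i, i ∈ FA ↔ P i := by intro i; simp [hFAdef]
  have hFB : ∀ i, i ∈ FB ↔ (i ≠ v ∧ ¬ P i) := by intro i; simp [hFBdef]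
  have hvA : v ∉ FA := by rw [hFA]; rintro ⟨h, -⟩; exact h rfl
  have hvB : v ∉ FB := by rw [hFB]; rintro ⟨h, -⟩; exact h rfl
  have hdisj : ∀ i, i ∈ FA → i ∈ FB → False := by
    intro i h1 h2; exact ((hFB i).1 h2).2 ((hFA i).1 h1)
  have huA : (u : V) ∈ FA := by
    rw [hFA]; exact ⟨u.2, by rw [Subtype.coe_eta]⟩
  have hwB : (w : V) ∈ FB := by
    rw [hFB]; refine ⟨w.2, ?_⟩; rintro ⟨h, hr⟩; exact huw (by rwa [Subtype.coe_eta] at hr)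
  have hedge : ∀ i j, G.Adj i j → i ∈ FA → j ≠ v → j ∈ FA := by
    intro i j hadj hi hj
    rw [hFA] at hi ⊢
    obtain ⟨hi', hr⟩ := hi
    refine ⟨hj, hr.trans (SimpleGraph.Adj.reachable ?_)⟩
    exact hadj
  have htri : ∀ i : V, i = v ∨ i ∈ FA ∨ i ∈ FB := by
    intro i
    by_cases h1 : i = v
    · exact Or.inl h1
    · by_cases h2 : P i
      · exact Or.inr (Or.inl ((hFA i).2 h2))
      · exact Or.inr (Or.inr ((hFB i).2 ⟨h1, h2⟩))
  set a := FA.card with hadef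
  set b := FB.card with hbdef
  have ha : 0 < a := Finset.card_pos.2 ⟨u, huA⟩
  have hb : 0 < b := Finset.card_pos.2 ⟨w, hwB⟩
  set x : V → ℝ := fun i => if i ∈ FA then (b : ℝ) else if i ∈ FB then -(a : ℝ) else 0 with hxdef
  have hxA : ∀ i ∈ FA, x i = (b : ℝ) := fun i hi => by simp [hxdef, hi]
  have hxB : ∀ i ∈ FB, x i = -(a : ℝ) := fun i hi => by
    have h1 : i ∉ FA := fun h => hdisj i h hi
    simp [hxdef, h1, hi]
  have hxv : x v = 0 := by simp [hxdef, hvA, hvB]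
  have hxu : x u = (b : ℝ) := hxA _ huA
  have hx0 : x ≠ 0 := by
    intro h
    have h2 := congrFun h (u : V)
    rw [hxu] at h2
    simp only [Pi.zero_apply, Nat.cast_eq_zero] at h2
    omega
  have hsum : (∑ i, x i) = 0 := by
    have hsplit : ∀ i, x i = (if i ∈ FA then (b:ℝ) else 0) + (if i ∈ FB then -(a:ℝ) else 0) := by
      intro i
      by_cases h1 : i ∈ FA
      · have h2 : i ∉ FB := fun h => hdisj i h1 h
        simp [hxdef, h1, h2]
      · by_cases h2 : i ∈ FB <;> simp [hxdef, h1, h2]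
    simp_rw [hsplit]
    rw [Finset.sum_add_distrib, Finset.sum_ite_mem, Finset.sum_ite_mem, Finset.univ_inter,
      Finset.univ_inter, Finset.sum_const, Finset.sum_const, nsmul_eq_mul, nsmul_eq_mul]
    rw [← hadef, ← hbdef]
    ring
  have hdotsq : x ⬝ᵥ x = ∑ i, (x i)^2 := by
    rw [show x ⬝ᵥ x = ∑ i, x i * x i from rfl]
    exact Finset.sum_congr rfl (fun i _ => (sq (x i)).symm)
  have hdpos : 0 < x ⬝ᵥ x := by
    rw [hdotsq]
    have hbpos : (0:ℝ) < (b : ℝ) := by exact_mod_cast hb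
    have h1 : (0:ℝ) < (x u)^2 := by rw [hxu]; exact pow_pos hbpos 2
    exact lt_of_lt_of_le h1 (Finset.single_le_sum (f := fun i => (x i)^2)
      (fun i _ => sq_nonneg _) (Finset.mem_univ _))
  have hQ : x ⬝ᵥ (G.lapMatrix ℝ) *ᵥ x =
      (∑ i : V, ∑ j : V, if G.Adj i j then (x i - x j)^2 else 0) / 2 := by
    rw [← Matrix.toLinearMap₂'_apply', SimpleGraph.lapMatrix_toLinearMap₂']
  have hcross : ∀ i j, i ≠ v → j ≠ v → G.Adj i j → x i = x j := by
    intro i j hi hj hadj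
    rcases htri i with h|h|h
    · exact absurd h hi
    · have hjA : j ∈ FA := hedge i j hadj h hj
      rw [hxA i h, hxA j hjA]
    · have hjB : j ∈ FB := by
        rcases htri j with h'|h'|h'
        · exact absurd h' hj
        · exact absurd (hedge j i hadj.symm h' hi) (fun hh => hdisj i hh h)
        · exact h'
      rw [hxB i h, hxB j hjB]
  have hbound : ∀ i j, (if G.Adj i j then (x i - x j)^2 else 0) ≤
      (if j = v then (x i)^2 else 0) + (if i = v then (x j)^2 else 0) := by
    intro i j
    by_cases hadj : G.Adj i j
    · by_cases hi : i = v
      · have hj : j ≠ v := by rintro rfl; exact G.irrefl (hi ▸ hadj)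
        rw [if_pos hadj, if_neg hj, if_pos hi, hi, hxv]
        nlinarith [sq_nonneg (x j)]
      · by_cases hj : j = v
        · rw [if_pos hadj, if_pos hj, if_neg hi, hj, hxv]
          nlinarith [sq_nonneg (x i)]
        · rw [if_pos hadj, if_neg hi, if_neg hj, hcross i j hi hj hadj]
          simp
    · rw [if_neg hadj]
      have t1 : (0:ℝ) ≤ (if j = v then (x i)^2 else 0) := by
        split
        · exact sq_nonneg _
        · exact le_refl 0
      have t2 : (0:ℝ) ≤ (if i = v then (x j)^2 else 0) := by
        split
        · exact sq_nonneg _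
        · exact le_refl 0
      exact add_nonneg t1 t2
  have hsum2 : (∑ i : V, ∑ j : V, if G.Adj i j then (x i - x j)^2 else 0) ≤ 2 * (x ⬝ᵥ x) := by
    calc (∑ i : V, ∑ j : V, if G.Adj i j then (x i - x j)^2 else 0)
        ≤ ∑ i : V, ∑ j : V, ((if j = v then (x i)^2 else 0) + (if i = v then (x j)^2 else 0)) :=
          Finset.sum_le_sum (fun i _ => Finset.sum_le_sum (fun j _ => hbound i j))
      _ = 2 * (x ⬝ᵥ x) := by
          simp_rw [Finset.sum_add_distrib]
          have e1 : ∀ i : V, (∑ j : V, if j = v then (x i)^2 else 0) = (x i)^2 := by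
            intro i; simp
          have e2 : (∑ i : V, ∑ j : V, if i = v then (x j)^2 else 0) = ∑ j : V, (x j)^2 := by
            rw [Finset.sum_comm]
            simp
          rw [e2]
          simp_rw [e1]
          rw [hdotsq]
          ring
  have hQle : x ⬝ᵥ (G.lapMatrix ℝ) *ᵥ x ≤ x ⬝ᵥ x := by
    rw [hQ]; linarith
  have hmem : (x ⬝ᵥ (G.lapMatrix ℝ) *ᵥ x) / (x ⬝ᵥ x) ∈ {r : ℝ | ∃ y : V → ℝ, y ≠ 0 ∧
      (∑ v, y v) = 0 ∧ r = (y ⬝ᵥ (G.lapMatrix ℝ) *ᵥ y) / (y ⬝ᵥ y)} := ⟨x, hx0, hsum, rfl⟩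
  have hbdd : BddBelow {r : ℝ | ∃ y : V → ℝ, y ≠ 0 ∧
      (∑ v, y v) = 0 ∧ r = (y ⬝ᵥ (G.lapMatrix ℝ) *ᵥ y) / (y ⬝ᵥ y)} := by
    refine ⟨0, ?_⟩
    rintro r ⟨y, hy0, hysum, rfl⟩
    have h1 : 0 ≤ y ⬝ᵥ (G.lapMatrix ℝ) *ᵥ y := by
      have := (SimpleGraph.posSemidef_lapMatrix ℝ G).dotProduct_mulVec_nonneg y
      simpa using this
    have h2 : 0 ≤ y ⬝ᵥ y := by
      have : y ⬝ᵥ y = ∑ i, y i * y i := rfl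
      rw [this]
      exact Finset.sum_nonneg (fun i _ => mul_self_nonneg _)
    exact div_nonneg h1 h2
  have hle : algConn G ≤ (x ⬝ᵥ (G.lapMatrix ℝ) *ᵥ x) / (x ⬝ᵥ x) := csInf_le hbdd hmem
  refine le_trans hle ?_
  rw [div_le_one hdpos]
  exact hQle
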